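/- Let ρ₀, ρ₁ be densities of mass V with ρ₁ > 0 λ-almost everywhere, and assume ρ₀²/ρ₁ is λ-integrable. With the χ²-distance d_χ(ρ₀, ρ₁) := ∫ (ρ₀ − ρ₁)²/ρ₁ dλ, the Fisher–Rao distance satisfies d_F(ρ₀, ρ₁) ≤ √((π/2) · d_χ(ρ₀, ρ₁)). (Item 9 of the Proposition in Appendix B.) -/
import Mathlib


open MeasureTheory Real Set

/-- A density of mass `V`: a measurable nonnegative function with total integral `V`. -/
def IsDensity {X : Type*} [MeasurableSpace X] (lam : Measure X) (V : ℝ) (ρ : X → ℝ) : Prop :=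
  Measurable ρ ∧ (∀ x, 0 ≤ ρ x) ∧ (∫ x, ρ x ∂lam) = V

/-- The Fisher–Rao (spherical Hellinger) distance between two densities. -/
noncomputable def fisherRaoDist {X : Type*} [MeasurableSpace X] (lam : Measure X) (V : ℝ)
    (ρ₀ ρ₁ : X → ℝ) : ℝ :=
  Real.sqrt V * Real.arccos ((1 / V) * ∫ x, Real.sqrt (ρ₀ x * ρ₁ x) ∂lam)

/-- The `χ²`-distance `∫ (ρ₀ − ρ₁)²/ρ₁ dλ`. -/
noncomputable def chiSqDist {X : Type*} [MeasurableSpace X] (lam : Measure X)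
    (ρ₀ ρ₁ : X → ℝ) : ℝ :=
  ∫ x, (ρ₀ x - ρ₁ x) ^ 2 / ρ₁ x ∂lam

/-- On `[0, π/2]` we have `θ² ≤ π (1 - cos θ)`. -/
lemma sq_le_pi_mul_one_sub_cos {θ : ℝ} (h0 : 0 ≤ θ) (h1 : θ ≤ π / 2) :
    θ ^ 2 ≤ π * (1 - Real.cos θ) := by
  have hmono : MonotoneOn (fun t => π * (1 - Real.cos t) - t ^ 2) (Set.Icc 0 (π / 2)) := by
    apply monotoneOn_of_deriv_nonneg (convex_Icc _ _)
    · fun_prop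
    · intro t ht
      apply DifferentiableAt.differentiableWithinAt
      fun_prop
    · intro t ht
      rw [interior_Icc, Set.mem_Ioo] at ht
      have hd : deriv (fun t => π * (1 - Real.cos t) - t ^ 2) t
          = π * Real.sin t - 2 * t := by
        have : HasDerivAt (fun t => π * (1 - Real.cos t) - t ^ 2)
            (π * (0 - (-Real.sin t)) - 2 * t ^ 1) t := by
          exact (((hasDerivAt_const t (1:ℝ)).sub (Real.hasDerivAt_cos t)).const_mul π).sub
            (hasDerivAt_pow 2 t)
        simpa using this.deriv
      rw [hd, sub_nonneg]
      have := Real.mul_le_sin ht.1.le ht.2.le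
      have hπ := Real.pi_pos
      calc 2 * t = π * (2 / π * t) := by field_simp
        _ ≤ π * Real.sin t := by
            exact mul_le_mul_of_nonneg_left this hπ.le
  have h01 : (0:ℝ) ∈ Set.Icc 0 (π/2) := ⟨le_refl _, by positivity⟩
  have hθm : θ ∈ Set.Icc 0 (π/2) := ⟨h0, h1⟩
  have := hmono h01 hθm h0
  simpa using this

/-- **Comparison of the Fisher–Rao distance and the `χ²`-distance** (item 9 of the
Proposition in Appendix B): `d_F ≤ √((π/2)·d_χ)`. -/
theorem fisherRao_le_sqrt_chiSq
    {X : Type*} [MeasurableSpace X] (lam : Measure X) [IsFiniteMeasure lam]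
    (V : ℝ) (hV : 0 < V) (hVmass : (lam Set.univ).toReal = V)
    (ρ₀ ρ₁ : X → ℝ) (h₀ : IsDensity lam V ρ₀) (h₁ : IsDensity lam V ρ₁)
    (h₁pos : ∀ᵐ x ∂lam, 0 < ρ₁ x)
    (hint : Integrable (fun x => (ρ₀ x) ^ 2 / ρ₁ x) lam) :
    fisherRaoDist lam V ρ₀ ρ₁ ≤ Real.sqrt ((π / 2) * chiSqDist lam ρ₀ ρ₁) := by
  obtain ⟨hm₀, hnn₀, hI₀⟩ := h₀
  obtain ⟨hm₁, hnn₁, hI₁⟩ := h₁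
  -- integrability of the densities
  have hint₀ : Integrable ρ₀ lam := by
    by_contra h
    rw [integral_undef h] at hI₀
    exact hV.ne hI₀
  have hint₁ : Integrable ρ₁ lam := by
    by_contra h
    rw [integral_undef h] at hI₁
    exact hV.ne hI₁
  -- the geometric mean is integrable
  have hmS : Measurable (fun x => Real.sqrt (ρ₀ x * ρ₁ x)) := (hm₀.mul hm₁).sqrt
  have hptAM : ∀ x, Real.sqrt (ρ₀ x * ρ₁ x) ≤ (ρ₀ x + ρ₁ x) / 2 := by
    intro x
    have h1 : Real.sqrt (ρ₀ x * ρ₁ x) = Real.sqrt (ρ₀ x) * Real.sqrt (ρ₁ x) :=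
      Real.sqrt_mul (hnn₀ x) _
    nlinarith [Real.sq_sqrt (hnn₀ x), Real.sq_sqrt (hnn₁ x),
      sq_nonneg (Real.sqrt (ρ₀ x) - Real.sqrt (ρ₁ x))]
  have hintS : Integrable (fun x => Real.sqrt (ρ₀ x * ρ₁ x)) lam := by
    apply Integrable.mono' ((hint₀.add hint₁).div_const 2) hmS.aestronglyMeasurable
    filter_upwards with x
    rw [Real.norm_eq_abs, abs_of_nonneg (Real.sqrt_nonneg _)]
    exact hptAM x
  set S : ℝ := ∫ x, Real.sqrt (ρ₀ x * ρ₁ x) ∂lam with hS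
  have hS_nonneg : 0 ≤ S := integral_nonneg fun x => Real.sqrt_nonneg _
  have hS_le : S ≤ V := by
    have h2 : (∫ x, (ρ₀ x + ρ₁ x) / 2 ∂lam) = V := by
      rw [integral_div, integral_add hint₀ hint₁, hI₀, hI₁]
      ring
    calc S ≤ ∫ x, (ρ₀ x + ρ₁ x) / 2 ∂lam :=
          integral_mono hintS ((hint₀.add hint₁).div_const 2) hptAM
      _ = V := h2
  -- integrability of the χ² integrand
  have hchi_ae : (fun x => (ρ₀ x) ^ 2 / ρ₁ x - 2 * ρ₀ x + ρ₁ x)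
      =ᵐ[lam] (fun x => (ρ₀ x - ρ₁ x) ^ 2 / ρ₁ x) := by
    filter_upwards [h₁pos] with x hx
    field_simp
    ring
  have hint_chi : Integrable (fun x => (ρ₀ x - ρ₁ x) ^ 2 / ρ₁ x) lam :=
    (((hint.sub (hint₀.const_mul 2)).add hint₁).congr hchi_ae)
  -- key comparison: 2(V - S) ≤ d_χ
  have hkey : 2 * (V - S) ≤ chiSqDist lam ρ₀ ρ₁ := by
    have hpt : ∀ᵐ x ∂lam,
        ρ₀ x + ρ₁ x - 2 * Real.sqrt (ρ₀ x * ρ₁ x) ≤ (ρ₀ x - ρ₁ x) ^ 2 / ρ₁ x := by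
      filter_upwards [h₁pos] with x hx
      rw [le_div_iff₀ hx]
      have hmul : Real.sqrt (ρ₀ x * ρ₁ x) = Real.sqrt (ρ₀ x) * Real.sqrt (ρ₁ x) :=
        Real.sqrt_mul (hnn₀ x) _
      nlinarith [Real.sq_sqrt (hnn₀ x), Real.sq_sqrt (hnn₁ x),
        Real.sqrt_nonneg (ρ₀ x), Real.sqrt_nonneg (ρ₁ x),
        sq_nonneg (Real.sqrt (ρ₀ x) - Real.sqrt (ρ₁ x)),
        mul_nonneg (Real.sqrt_nonneg (ρ₀ x)) (Real.sqrt_nonneg (ρ₁ x)),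
        sq_nonneg ((Real.sqrt (ρ₀ x) - Real.sqrt (ρ₁ x)) * Real.sqrt (ρ₀ x))]
    have hle : (∫ x, (ρ₀ x + ρ₁ x - 2 * Real.sqrt (ρ₀ x * ρ₁ x)) ∂lam)
        ≤ chiSqDist lam ρ₀ ρ₁ :=
      integral_mono_ae ((hint₀.add hint₁).sub (hintS.const_mul 2)) hint_chi hpt
    have heq : (∫ x, (ρ₀ x + ρ₁ x - 2 * Real.sqrt (ρ₀ x * ρ₁ x)) ∂lam)
        = 2 * (V - S) := by
      have e1 : (∫ x, (ρ₀ x + ρ₁ x - 2 * Real.sqrt (ρ₀ x * ρ₁ x)) ∂lam)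
          = (∫ x, (ρ₀ x + ρ₁ x) ∂lam) - ∫ x, 2 * Real.sqrt (ρ₀ x * ρ₁ x) ∂lam :=
        integral_sub (hint₀.add hint₁) (hintS.const_mul 2)
      rw [e1, integral_add hint₀ hint₁, integral_const_mul, hI₀, hI₁, ← hS]
      ring
    linarith
  -- put everything together
  set s : ℝ := (1 / V) * S with hs
  have hs0 : 0 ≤ s := by positivity
  have hs1 : s ≤ 1 := by
    rw [hs, one_div, inv_mul_le_iff₀ hV, mul_one]
    exact hS_le
  set θ : ℝ := Real.arccos s with hθ
  have hθ0 : 0 ≤ θ := Real.arccos_nonneg s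
  have hθ1 : θ ≤ π / 2 := Real.arccos_le_pi_div_two.2 hs0
  have hcos : Real.cos θ = s := Real.cos_arccos (by linarith) hs1
  have hquad : θ ^ 2 ≤ π * (1 - s) := by
    have := sq_le_pi_mul_one_sub_cos hθ0 hθ1
    rwa [hcos] at this
  have hgoal : (Real.sqrt V * θ) ^ 2 ≤ (π / 2) * chiSqDist lam ρ₀ ρ₁ := by
    have hsqV : (Real.sqrt V) ^ 2 = V := Real.sq_sqrt hV.le
    have h1 : (Real.sqrt V * θ) ^ 2 = V * θ ^ 2 := by rw [mul_pow, hsqV]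
    have h2 : V * θ ^ 2 ≤ V * (π * (1 - s)) :=
      mul_le_mul_of_nonneg_left hquad hV.le
    have h3 : V * (π * (1 - s)) = π * (V - S) := by
      rw [hs]
      field_simp
    have hπ := Real.pi_pos
    nlinarith
  have : fisherRaoDist lam V ρ₀ ρ₁ = Real.sqrt V * θ := rfl
  rw [this]
  exact Real.le_sqrt_of_sq_le hgoal
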